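/- Let (Ω, 𝒜, μ) be a σ-finite measure space. Let f_P, f_Q and, for each i ∈ ℕ, f_{P_i}, f_{Q_i} be probability densities with respect to μ. Suppose (f_{P_i}) ratio-converges in measure to f_P and (f_{Q_i}) ratio-converges in measure to f_Q. Let F : (0,∞) → ℝ be convex and continuously differentiable with F(1) = 0, with finite limit as x → 0⁺, and with F′ bounded above on (0,∞). Then all the integrals ∫_Ω F(f_{Q_i}(x)/f_{P_i}(x)) f_{P_i}(x) dμ(x) and ∫_Ω F(f_Q(x)/f_P(x)) f_P(x) dμ(x) are well-defined and finite, and lim_{i→∞} ∫_Ω F(f_{Q_i}(x)/f_{P_i}(x)) f_{P_i}(x) dμ(x) = ∫_Ω F(f_Q(x)/f_P(x)) f_P(x) dμ(x). -/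

import Mathlib

open MeasureTheory Filter

section auxlemmas
variable {Ω : Type*} [MeasurableSpace Ω] {μ : Measure Ω}

lemma ratio_tim_aux {p : Ω → ℝ} {pi : ℕ → Ω → ℝ} (hp : Measurable p)
    (hpimeas : ∀ i, Measurable (pi i)) (hpint : Integrable p μ)
    (hppos : ∀ᵐ x ∂μ, 0 < p x)
    (hconv : ∀ ε > (0:ℝ),
      Tendsto (fun i => ∫ x in {x | ε < |pi i x / p x - 1|}, p x ∂μ) atTop (nhds 0)) :
    TendstoInMeasure (μ.withDensity fun x => ENNReal.ofReal (p x))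
      (fun i x => pi i x / p x) atTop (fun _ => 1) := by
  refine tendstoInMeasure_of_ne_top fun ε' hε' hεtop => ?_
  set ε := ε'.toReal with hεdef
  have hε : 0 < ε := ENNReal.toReal_pos hε'.ne' hεtop
  set ν := μ.withDensity fun x => ENNReal.ofReal (p x) with hν
  have hmeasS : ∀ i, MeasurableSet {x | ε / 2 < |pi i x / p x - 1|} := fun i =>
    measurableSet_lt measurable_const ((((hpimeas i).div hp).sub measurable_const).abs)
  have hval : ∀ i, ν {x | ε / 2 < |pi i x / p x - 1|}
      = ENNReal.ofReal (∫ x in {x | ε / 2 < |pi i x / p x - 1|}, p x ∂μ) := by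
    intro i
    rw [hν, withDensity_apply _ (hmeasS i)]
    exact (ofReal_integral_eq_lintegral_ofReal (hpint.restrict)
      (ae_restrict_of_ae (hppos.mono fun x hx => hx.le))).symm
  have htend : Tendsto (fun i => ν {x | ε / 2 < |pi i x / p x - 1|}) atTop (nhds 0) := by
    have := (ENNReal.continuous_ofReal.tendsto 0).comp (hconv (ε / 2) (by linarith))
    simp only [Function.comp_def, ENNReal.ofReal_zero] at this
    exact (tendsto_congr hval).2 this
  refine tendsto_of_tendsto_of_tendsto_of_le_of_le tendsto_const_nhds htend
    (fun i => bot_le) (fun i => measure_mono ?_)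
  intro x hx
  simp only [Set.mem_setOf_eq] at hx ⊢
  rw [edist_dist, ENNReal.le_ofReal_iff_toReal_le hεtop dist_nonneg, Real.dist_eq] at hx
  linarith

lemma pratt_aux {h : ℕ → Ω → ℝ} {h₀ : Ω → ℝ} {g : ℕ → Ω → ℝ} {g₀ : Ω → ℝ}
    (hinth : ∀ i, Integrable (h i) μ) (hinth₀ : Integrable h₀ μ)
    (hintg : ∀ i, Integrable (g i) μ) (hintg₀ : Integrable g₀ μ)
    (hle : ∀ i, ∀ᵐ x ∂μ, |h i x| ≤ g i x)
    (hconvh : ∀ᵐ x ∂μ, Tendsto (fun i => h i x) atTop (nhds (h₀ x)))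
    (hconvg : ∀ᵐ x ∂μ, Tendsto (fun i => g i x) atTop (nhds (g₀ x)))
    (hconvint : Tendsto (fun i => ∫ x, g i x ∂μ) atTop (nhds (∫ x, g₀ x ∂μ))) :
    Tendsto (fun i => ∫ x, h i x ∂μ) atTop (nhds (∫ x, h₀ x ∂μ)) := by
  have hle₀ : ∀ᵐ x ∂μ, |h₀ x| ≤ g₀ x := by
    have := ae_all_iff.2 hle
    filter_upwards [this, hconvh, hconvg] with x hx hhx hgx
    exact le_of_tendsto_of_tendsto' (hhx.abs) hgx hx
  set A : ℕ → ENNReal := fun i => ∫⁻ x, ENNReal.ofReal |h i x - h₀ x| ∂μ with hA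
  set B : ℕ → ENNReal := fun i => ∫⁻ x, ENNReal.ofReal (g i x) ∂μ with hB
  set G : ENNReal := ∫⁻ x, ENNReal.ofReal (g₀ x) ∂μ with hG
  have hgnn : ∀ i, ∀ᵐ x ∂μ, 0 ≤ g i x := fun i => (hle i).mono fun x hx => (abs_nonneg _).trans hx
  have hg₀nn : ∀ᵐ x ∂μ, 0 ≤ g₀ x := hle₀.mono fun x hx => (abs_nonneg _).trans hx
  have hBi : ∀ i, B i = ENNReal.ofReal (∫ x, g i x ∂μ) := fun i =>
    (ofReal_integral_eq_lintegral_ofReal (hintg i) (hgnn i)).symm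
  have hGeq : G = ENNReal.ofReal (∫ x, g₀ x ∂μ) :=
    (ofReal_integral_eq_lintegral_ofReal hintg₀ hg₀nn).symm
  have hGne : G ≠ ⊤ := by
    rw [hGeq]; exact ENNReal.ofReal_ne_top
  have hBtendsto : Tendsto B atTop (nhds G) := by
    have hfe : (fun i => ENNReal.ofReal (∫ x, g i x ∂μ)) = B := funext fun i => (hBi i).symm
    rw [hGeq, ← hfe]
    exact (ENNReal.continuous_ofReal.tendsto _).comp hconvint
  have hptle : ∀ i, ∀ᵐ x ∂μ, ENNReal.ofReal |h i x - h₀ x|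
      ≤ ENNReal.ofReal (g i x) + ENNReal.ofReal (g₀ x) := by
    intro i
    filter_upwards [hle i, hle₀] with x h1 h2
    rw [← ENNReal.ofReal_add ((abs_nonneg _).trans h1) ((abs_nonneg _).trans h2)]
    exact ENNReal.ofReal_le_ofReal ((abs_sub _ _).trans (add_le_add h1 h2))
  have hAmeas : ∀ i, AEMeasurable (fun x => ENNReal.ofReal |h i x - h₀ x|) μ := fun i =>
    (((hinth i).sub hinth₀).abs.aemeasurable).ennreal_ofReal
  have hgmeas : ∀ i, AEMeasurable (fun x => ENNReal.ofReal (g i x)) μ := fun i =>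
    (hintg i).aemeasurable.ennreal_ofReal
  have hg₀meas : AEMeasurable (fun x => ENNReal.ofReal (g₀ x)) μ :=
    hintg₀.aemeasurable.ennreal_ofReal
  have hABG : ∀ i, A i ≤ B i + G := by
    intro i
    calc A i ≤ ∫⁻ x, (ENNReal.ofReal (g i x) + ENNReal.ofReal (g₀ x)) ∂μ :=
          lintegral_mono_ae (hptle i)
    _ = B i + G := lintegral_add_left' (hgmeas i) _
  have hAne : ∀ i, A i ≠ ⊤ := fun i =>
    ((hABG i).trans_lt (by
      rw [hBi i]
      exact ENNReal.add_lt_top.2 ⟨ENNReal.ofReal_lt_top, hGne.lt_top⟩)).ne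
  have hU : ∀ i, ∫⁻ x, (ENNReal.ofReal (g i x) + ENNReal.ofReal (g₀ x)
      - ENNReal.ofReal |h i x - h₀ x|) ∂μ = (B i + G) - A i := by
    intro i
    rw [lintegral_sub' (hAmeas i) (hAne i) (hptle i), lintegral_add_left' (hgmeas i) _]
  have hfatou : 2 * G ≤ Filter.atTop.liminf (fun i => (B i + G) - A i) := by
    have hfa := lintegral_liminf_le' (μ := μ) (u := atTop)
      (f := fun i x => ENNReal.ofReal (g i x) + ENNReal.ofReal (g₀ x)
        - ENNReal.ofReal |h i x - h₀ x|)
      (fun i => ((hgmeas i).add hg₀meas).sub (hAmeas i))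
    simp only [hU] at hfa
    refine le_trans (le_of_eq ?_) hfa
    have : ∀ᵐ x ∂μ, Filter.atTop.liminf (fun i => ENNReal.ofReal (g i x) + ENNReal.ofReal (g₀ x)
        - ENNReal.ofReal |h i x - h₀ x|) = 2 * ENNReal.ofReal (g₀ x) := by
      filter_upwards [hconvh, hconvg] with x hhx hgx
      have h1 : Tendsto (fun i => ENNReal.ofReal (g i x) + ENNReal.ofReal (g₀ x)
          - ENNReal.ofReal |h i x - h₀ x|) atTop (nhds (2 * ENNReal.ofReal (g₀ x))) := by
        have ht1 : Tendsto (fun i => ENNReal.ofReal (g i x) + ENNReal.ofReal (g₀ x)) atTop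
            (nhds (ENNReal.ofReal (g₀ x) + ENNReal.ofReal (g₀ x))) :=
          (((ENNReal.continuous_ofReal.tendsto _).comp hgx).add tendsto_const_nhds)
        have ht2 : Tendsto (fun i => ENNReal.ofReal |h i x - h₀ x|) atTop (nhds 0) := by
          have : Tendsto (fun i => |h i x - h₀ x|) atTop (nhds 0) := by
            have h2 := (hhx.sub (tendsto_const_nhds (x := h₀ x))).abs
            simpa using h2
          simpa [Function.comp_def] using (ENNReal.continuous_ofReal.tendsto _).comp this
        have := ENNReal.Tendsto.sub ht1 ht2 (by simp [ENNReal.ofReal_ne_top])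
        simpa [two_mul] using this
      exact h1.liminf_eq
    calc 2 * G = ∫⁻ x, 2 * ENNReal.ofReal (g₀ x) ∂μ := by
          rw [lintegral_const_mul' _ _ (by norm_num)]
    _ = ∫⁻ x, Filter.atTop.liminf (fun i => ENNReal.ofReal (g i x) + ENNReal.ofReal (g₀ x)
          - ENNReal.ofReal |h i x - h₀ x|) ∂μ := (lintegral_congr_ae (this.mono fun x hx => hx.symm))
  have hBGtendsto : Tendsto (fun i => B i + G) atTop (nhds (2 * G)) := by
    simpa [two_mul] using hBtendsto.add (tendsto_const_nhds (x := G))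
  have hUtendsto : Tendsto (fun i => (B i + G) - A i) atTop (nhds (2 * G)) := by
    refine tendsto_of_le_liminf_of_limsup_le hfatou ?_
    calc Filter.atTop.limsup (fun i => (B i + G) - A i)
        ≤ Filter.atTop.limsup (fun i => B i + G) :=
          limsup_le_limsup (Eventually.of_forall fun i => tsub_le_self)
      _ = 2 * G := hBGtendsto.limsup_eq
  have hAeq : ∀ i, A i = (B i + G) - ((B i + G) - A i) := by
    intro i
    rw [ENNReal.sub_sub_cancel _ (hABG i)]
    rw [hBi i]
    exact ENNReal.add_ne_top.2 ⟨ENNReal.ofReal_ne_top, hGne⟩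
  have hAtendsto : Tendsto A atTop (nhds 0) := by
    have := ENNReal.Tendsto.sub hBGtendsto hUtendsto (Or.inl (by
      simp only [ne_eq, ENNReal.mul_eq_top]
      push_neg
      exact ⟨fun _ => hGne, fun h => absurd h (by norm_num)⟩))
    simp only [tsub_self] at this
    exact (tendsto_congr hAeq).2 this
  refine tendsto_integral_of_L1 h₀ hinth₀.aestronglyMeasurable (Eventually.of_forall hinth) ?_
  have : ∀ i, (∫⁻ x, ‖h i x - h₀ x‖ₑ ∂μ) = A i := by
    intro i
    refine lintegral_congr fun x => ?_
    rw [← ofReal_norm, Real.norm_eq_abs]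
  simpa only [this] using hAtendsto

lemma integ_aux {p q : Ω → ℝ} (hp : Measurable p) (hq : Measurable q)
    (hpi : Integrable p μ) (hqi : Integrable q μ)
    (hppos : ∀ᵐ x ∂μ, 0 < p x) (hqpos : ∀ᵐ x ∂μ, 0 < q x)
    {G : ℝ → ℝ} (hG : Continuous G) {A B : ℝ}
    (hbd : ∀ t ∈ Set.Ioi (0:ℝ), |G t| ≤ A + B * t) :
    Integrable (fun x => G (q x / p x) * p x) μ := by
  refine Integrable.mono' ((hpi.const_mul A).add (hqi.const_mul B))
    ((hG.measurable.comp (hq.div hp)).mul hp).aestronglyMeasurable ?_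
  filter_upwards [hppos, hqpos] with x hpx hqx
  have hr : 0 < q x / p x := div_pos hqx hpx
  have h1 : ‖G (q x / p x) * p x‖ = |G (q x / p x)| * p x := by
    rw [Real.norm_eq_abs, abs_mul, abs_of_pos hpx]
  rw [h1]
  calc |G (q x / p x)| * p x ≤ (A + B * (q x / p x)) * p x :=
        mul_le_mul_of_nonneg_right (hbd _ hr) hpx.le
  _ = A * p x + B * q x := by
      rw [add_mul, mul_assoc, div_mul_cancel₀ _ (ne_of_gt hpx)]

lemma Gcont_aux (F : ℝ → ℝ) (hFderiv : ∀ x ∈ Set.Ioi (0:ℝ), ContinuousAt F x)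
    (L₀ : ℝ) (hFlim : Tendsto F (nhdsWithin 0 (Set.Ioi 0)) (nhds L₀)) :
    Continuous (fun t => if 0 < t then F t else L₀) := by
  set G : ℝ → ℝ := fun t => if 0 < t then F t else L₀ with hG
  rw [continuous_iff_continuousAt]
  intro x
  rcases lt_trichotomy x 0 with hx | hx | hx
  · have hev : ∀ᶠ t in nhds x, G t = L₀ := by
      filter_upwards [Iio_mem_nhds hx] with t ht
      simp [hG, not_lt.2 (le_of_lt (Set.mem_Iio.1 ht))]
    exact ContinuousAt.congr continuousAt_const (hev.mono fun t ht => ht.symm)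
  · subst hx
    have hG0 : G 0 = L₀ := by simp [hG]
    rw [ContinuousAt, hG0]
    rw [← nhdsLE_sup_nhdsGT, tendsto_sup]
    constructor
    · refine Tendsto.congr' ?_ (tendsto_const_nhds (x := L₀))
      filter_upwards [self_mem_nhdsWithin] with t ht
      simp [hG, not_lt.2 (Set.mem_Iic.1 ht)]
    · refine Tendsto.congr' ?_ hFlim
      filter_upwards [self_mem_nhdsWithin] with t ht
      simp [hG, Set.mem_Ioi.1 ht]
  · have hev : ∀ᶠ t in nhds x, G t = F t := by
      filter_upwards [Ioi_mem_nhds hx] with t ht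
      simp [hG, Set.mem_Ioi.1 ht]
    exact ContinuousAt.congr (hFderiv x hx) (hev.mono fun t ht => ht.symm)

lemma Fbound_aux (F F' : ℝ → ℝ)
    (hFconv : ConvexOn ℝ (Set.Ioi 0) F)
    (hFderiv : ∀ x ∈ Set.Ioi (0:ℝ), HasDerivAt F (F' x) x)
    (hF1 : F 1 = 0)
    (L₀ : ℝ) (hFlim : Tendsto F (nhdsWithin 0 (Set.Ioi 0)) (nhds L₀))
    (C : ℝ) (hFbd : ∀ x ∈ Set.Ioi (0:ℝ), F' x ≤ C) :
    ∃ A B : ℝ, 0 ≤ A ∧ 0 ≤ B ∧ ∀ t ∈ Set.Ioi (0:ℝ), |F t| ≤ A + B * t := by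
  have hup1 : ∀ t : ℝ, 1 < t → F t ≤ C * (t - 1) := by
    intro t ht
    have hcont : ContinuousOn F (Set.Icc 1 t) := fun y hy =>
      ((hFderiv y (lt_of_lt_of_le one_pos hy.1)).continuousAt).continuousWithinAt
    have hd : ∀ y ∈ Set.Ioo (1:ℝ) t, HasDerivAt F (F' y) y := fun y hy =>
      hFderiv y (lt_trans one_pos hy.1)
    obtain ⟨c, hc, hceq⟩ := exists_hasDerivAt_eq_slope F F' ht hcont hd
    rw [hF1, sub_zero] at hceq
    have hne : t - 1 ≠ 0 := sub_ne_zero.2 (ne_of_gt ht)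
    have hFt : F t = F' c * (t - 1) := by rw [hceq, div_mul_cancel₀ _ hne]
    rw [hFt]
    have := hFbd c (lt_trans one_pos hc.1)
    nlinarith [sub_pos.2 ht]
  have hup2 : ∀ t : ℝ, 0 < t → t < 1 → F t ≤ max (L₀ + 1) 0 := by
    intro t ht ht1
    have hev : ∀ᶠ s in nhdsWithin 0 (Set.Ioi 0), F s < L₀ + 1 :=
      hFlim.eventually_lt_const (lt_add_one L₀)
    have hev2 : ∀ᶠ s in nhdsWithin 0 (Set.Ioi 0), s ∈ Set.Ioo (0:ℝ) t :=
      Ioo_mem_nhdsGT_of_mem ⟨le_refl 0, ht⟩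
    obtain ⟨s, hs1, hs2⟩ := (hev.and hev2).exists
    have hseg : t ∈ segment ℝ s 1 := by
      rw [segment_eq_Icc (le_of_lt (lt_trans hs2.2 ht1))]
      exact ⟨le_of_lt hs2.2, le_of_lt ht1⟩
    have := hFconv.le_on_segment hs2.1 (Set.mem_Ioi.2 one_pos) hseg
    rw [hF1] at this
    exact this.trans (max_le_max (le_of_lt hs1) le_rfl)
  have hlo1 : ∀ t : ℝ, 1 < t → -(2 * |F (1/2)|) * (t - 1) ≤ F t := by
    intro t ht
    have hs := hFconv.slope_mono_adjacent (x := (1:ℝ)/2) (y := 1) (z := t)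
      (by norm_num) (lt_trans one_pos ht) (by norm_num) ht
    rw [hF1] at hs
    have h1 : (0 - F (1/2)) / (1 - 1/2) = -2 * F (1/2) := by norm_num; ring
    rw [h1] at hs
    have ht1 : (0:ℝ) < t - 1 := sub_pos.2 ht
    rw [sub_zero] at hs
    have h4 : (-2 * F (1/2)) * (t - 1) ≤ F t := (le_div_iff₀ ht1).1 hs
    nlinarith [mul_le_mul_of_nonneg_right (le_abs_self (F (1/2))) ht1.le]
  have hlo2 : ∀ t : ℝ, 0 < t → t < 1 → -|F 2| ≤ F t := by
    intro t ht ht1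
    have hs := hFconv.slope_mono_adjacent (x := t) (y := 1) (z := 2)
      (Set.mem_Ioi.2 ht) (by norm_num) ht1 one_lt_two
    rw [hF1] at hs
    have h2 : (F 2 - 0) / (2 - 1) = F 2 := by norm_num
    rw [h2] at hs
    have h3 : (0:ℝ) < 1 - t := sub_pos.2 ht1
    have h4 := (div_le_iff₀ h3).1 hs
    have h5 : F 2 * (1 - t) ≤ |F 2| := by
      have := le_abs_self (F 2)
      have := abs_nonneg (F 2)
      nlinarith
    nlinarith
  refine ⟨|L₀| + 1 + |F 2| + |C| + 2 * |F (1/2)|, |C| + 2 * |F (1/2)|,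
    by positivity, by positivity, fun t ht => ?_⟩
  rw [Set.mem_Ioi] at ht
  rw [abs_le]
  rcases lt_trichotomy t 1 with h | h | h
  · constructor
    · have := hlo2 t ht h
      nlinarith [abs_nonneg L₀, abs_nonneg C, abs_nonneg (F (1/2)), abs_nonneg (F 2)]
    · have := hup2 t ht h
      have hm : max (L₀ + 1) 0 ≤ |L₀| + 1 := by
        rcases le_or_gt (L₀ + 1) 0 with h' | h'
        · simp [max_eq_right h']; positivity
        · rw [max_eq_left h'.le]
          nlinarith [le_abs_self L₀, abs_nonneg L₀]
      nlinarith [abs_nonneg C, abs_nonneg (F (1/2)), abs_nonneg (F 2)]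
  · subst h
    rw [hF1]
    constructor <;> nlinarith [abs_nonneg L₀, abs_nonneg C, abs_nonneg (F (1/2)), abs_nonneg (F 2)]
  · constructor
    · have := hlo1 t h
      nlinarith [abs_nonneg L₀, abs_nonneg C, abs_nonneg (F (1/2)), abs_nonneg (F 2)]
    · have := hup1 t h
      nlinarith [le_abs_self C, abs_nonneg C, abs_nonneg L₀, abs_nonneg (F (1/2)), abs_nonneg (F 2)]

end auxlemmas


/-- Problem continuity of `f`-divergences: if probability densities `f_{P_i}` and
`f_{Q_i}` ratio-converge in measure to `f_P` and `f_Q` respectively, and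
`F : (0,∞) → ℝ` is convex, continuously differentiable (with derivative `F'`),
satisfies `F(1) = 0`, has a finite limit at `0⁺` and `F'` bounded above, then all the
`f`-divergence integrals are well-defined and finite, and
`∫ F(f_{Q_i}/f_{P_i}) f_{P_i} dμ → ∫ F(f_Q/f_P) f_P dμ`. -/
theorem stmt3 {Ω : Type*} [MeasurableSpace Ω] (μ : Measure Ω) [SigmaFinite μ]
    (fP fQ : Ω → ℝ) (fPi fQi : ℕ → Ω → ℝ)
    (hfPmeas : Measurable fP) (hfPpos : ∀ᵐ x ∂μ, 0 < fP x) (hfPint : ∫ x, fP x ∂μ = 1)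
    (hfQmeas : Measurable fQ) (hfQpos : ∀ᵐ x ∂μ, 0 < fQ x) (hfQint : ∫ x, fQ x ∂μ = 1)
    (hfPimeas : ∀ i, Measurable (fPi i)) (hfPipos : ∀ i, ∀ᵐ x ∂μ, 0 < fPi i x)
    (hfPiint : ∀ i, ∫ x, fPi i x ∂μ = 1)
    (hfQimeas : ∀ i, Measurable (fQi i)) (hfQipos : ∀ i, ∀ᵐ x ∂μ, 0 < fQi i x)
    (hfQiint : ∀ i, ∫ x, fQi i x ∂μ = 1)
    (hPconv : ∀ ε > (0:ℝ),
      Tendsto (fun i => ∫ x in {x | ε < |fPi i x / fP x - 1|}, fP x ∂μ) atTop (nhds 0))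
    (hQconv : ∀ ε > (0:ℝ),
      Tendsto (fun i => ∫ x in {x | ε < |fQi i x / fQ x - 1|}, fQ x ∂μ) atTop (nhds 0))
    (F F' : ℝ → ℝ)
    (hFconv : ConvexOn ℝ (Set.Ioi 0) F)
    (hFderiv : ∀ x ∈ Set.Ioi (0:ℝ), HasDerivAt F (F' x) x)
    (hFcont : ContinuousOn F' (Set.Ioi 0))
    (hF1 : F 1 = 0)
    (L₀ : ℝ) (hFlim : Tendsto F (nhdsWithin 0 (Set.Ioi 0)) (nhds L₀))
    (C : ℝ) (hFbd : ∀ x ∈ Set.Ioi (0:ℝ), F' x ≤ C) :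
    (∀ i, Integrable (fun x => F (fQi i x / fPi i x) * fPi i x) μ) ∧
    Integrable (fun x => F (fQ x / fP x) * fP x) μ ∧
    Tendsto (fun i => ∫ x, F (fQi i x / fPi i x) * fPi i x ∂μ) atTop
      (nhds (∫ x, F (fQ x / fP x) * fP x ∂μ)) := by
  -- integrability of the densities
  have hPint : Integrable fP μ := by
    by_contra hc; rw [integral_undef hc] at hfPint; norm_num at hfPint
  have hQint : Integrable fQ μ := by
    by_contra hc; rw [integral_undef hc] at hfQint; norm_num at hfQint
  have hPiint : ∀ i, Integrable (fPi i) μ := by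
    intro i; by_contra hc
    have h := hfPiint i; rw [integral_undef hc] at h; norm_num at h
  have hQiint : ∀ i, Integrable (fQi i) μ := by
    intro i; by_contra hc
    have h := hfQiint i; rw [integral_undef hc] at h; norm_num at h
  -- growth bound for F
  obtain ⟨A, B, hA, hB, hbd⟩ := Fbound_aux F F' hFconv hFderiv hF1 L₀ hFlim C hFbd
  -- the continuous extension of F
  set G : ℝ → ℝ := fun t => if 0 < t then F t else L₀ with hGdef
  have hGcont : Continuous G :=
    Gcont_aux F (fun x hx => (hFderiv x hx).continuousAt) L₀ hFlim
  have hGbd : ∀ t ∈ Set.Ioi (0:ℝ), |G t| ≤ A + B * t := by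
    intro t ht
    have := hbd t ht
    simpa [hGdef, if_pos (Set.mem_Ioi.1 ht)] using this
  -- integrability of the divergences
  have key : ∀ (p q : Ω → ℝ), Measurable p → Measurable q → Integrable p μ → Integrable q μ →
      (∀ᵐ x ∂μ, 0 < p x) → (∀ᵐ x ∂μ, 0 < q x) →
      Integrable (fun x => F (q x / p x) * p x) μ := by
    intro p q hp hq hpint hqint hppos hqpos
    refine (integ_aux hp hq hpint hqint hppos hqpos hGcont hGbd).congr ?_
    filter_upwards [hppos, hqpos] with x hpx hqx
    simp [hGdef, if_pos (div_pos hqx hpx)]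
  have hint_i : ∀ i, Integrable (fun x => F (fQi i x / fPi i x) * fPi i x) μ := fun i =>
    key _ _ (hfPimeas i) (hfQimeas i) (hPiint i) (hQiint i) (hfPipos i) (hfQipos i)
  have hint0 : Integrable (fun x => F (fQ x / fP x) * fP x) μ :=
    key _ _ hfPmeas hfQmeas hPint hQint hfPpos hfQpos
  refine ⟨hint_i, hint0, ?_⟩
  -- absolute continuity setup
  set νP := μ.withDensity fun x => ENNReal.ofReal (fP x) with hνP
  set νQ := μ.withDensity fun x => ENNReal.ofReal (fQ x) with hνQ
  have hmuP : μ ≪ νP :=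
    withDensity_absolutelyContinuous' hfPmeas.ennreal_ofReal.aemeasurable
      (hfPpos.mono fun x hx => by simp [ENNReal.ofReal_eq_zero, not_le, hx])
  have hmuQ : μ ≪ νQ :=
    withDensity_absolutelyContinuous' hfQmeas.ennreal_ofReal.aemeasurable
      (hfQpos.mono fun x hx => by simp [ENNReal.ofReal_eq_zero, not_le, hx])
  have hTP : TendstoInMeasure νP (fun i x => fPi i x / fP x) atTop (fun _ => 1) :=
    ratio_tim_aux hfPmeas hfPimeas hPint hfPpos hPconv
  have hTQ : TendstoInMeasure νQ (fun i x => fQi i x / fQ x) atTop (fun _ => 1) :=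
    ratio_tim_aux hfQmeas hfQimeas hQint hfQpos hQconv
  -- subsequence argument
  refine tendsto_of_subseq_tendsto fun ns hns => ?_
  have hTP' : TendstoInMeasure νP (fun i x => fPi (ns i) x / fP x) atTop (fun _ => 1) :=
    fun ε hε => (hTP ε hε).comp hns
  obtain ⟨ms₁, hms₁mono, hms₁⟩ := hTP'.exists_seq_tendsto_ae
  have hTQ' : TendstoInMeasure νQ (fun i x => fQi (ns (ms₁ i)) x / fQ x) atTop (fun _ => 1) :=
    fun ε hε => (hTQ ε hε).comp (hns.comp hms₁mono.tendsto_atTop)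
  obtain ⟨ms₂, hms₂mono, hms₂⟩ := hTQ'.exists_seq_tendsto_ae
  set φ : ℕ → ℕ := fun n => ns (ms₁ (ms₂ n)) with hφ
  refine ⟨fun n => ms₁ (ms₂ n), ?_⟩
  -- a.e. convergence of ratios w.r.t. μ
  have haeP : ∀ᵐ x ∂μ, Tendsto (fun n => fPi (φ n) x / fP x) atTop (nhds 1) := by
    refine hmuP.ae_le ?_
    filter_upwards [hms₁] with x hx
    exact hx.comp hms₂mono.tendsto_atTop
  have haeQ : ∀ᵐ x ∂μ, Tendsto (fun n => fQi (φ n) x / fQ x) atTop (nhds 1) :=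
    hmuQ.ae_le hms₂
  -- a.e. pointwise convergence of the integrands
  have haeh : ∀ᵐ x ∂μ, Tendsto (fun n => F (fQi (φ n) x / fPi (φ n) x) * fPi (φ n) x) atTop
      (nhds (F (fQ x / fP x) * fP x)) := by
    filter_upwards [haeP, haeQ, hfPpos, hfQpos] with x hP hQ hp hq
    have hPlim : Tendsto (fun n => fPi (φ n) x) atTop (nhds (fP x)) := by
      have h1 := hP.mul_const (fP x)
      simp only [one_mul] at h1
      refine h1.congr fun n => ?_
      field_simp
    have hQlim : Tendsto (fun n => fQi (φ n) x) atTop (nhds (fQ x)) := by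
      have h1 := hQ.mul_const (fQ x)
      simp only [one_mul] at h1
      refine h1.congr fun n => ?_
      field_simp
    have hratio : Tendsto (fun n => fQi (φ n) x / fPi (φ n) x) atTop (nhds (fQ x / fP x)) :=
      hQlim.div hPlim (ne_of_gt hp)
    have hFcontat : ContinuousAt F (fQ x / fP x) :=
      (hFderiv _ (div_pos hq hp)).continuousAt
    exact (hFcontat.tendsto.comp hratio).mul hPlim
  -- a.e. convergence of the dominating functions
  have haeg : ∀ᵐ x ∂μ, Tendsto (fun n => A * fPi (φ n) x + B * fQi (φ n) x) atTop
      (nhds (A * fP x + B * fQ x)) := by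
    filter_upwards [haeP, haeQ, hfPpos, hfQpos] with x hP hQ hp hq
    have hPlim : Tendsto (fun n => fPi (φ n) x) atTop (nhds (fP x)) := by
      have h1 := hP.mul_const (fP x)
      simp only [one_mul] at h1
      refine h1.congr fun n => ?_
      field_simp
    have hQlim : Tendsto (fun n => fQi (φ n) x) atTop (nhds (fQ x)) := by
      have h1 := hQ.mul_const (fQ x)
      simp only [one_mul] at h1
      refine h1.congr fun n => ?_
      field_simp
    exact ((tendsto_const_nhds.mul hPlim).add (tendsto_const_nhds.mul hQlim))
  -- domination
  have hdom : ∀ n, ∀ᵐ x ∂μ, |F (fQi (φ n) x / fPi (φ n) x) * fPi (φ n) x|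
      ≤ A * fPi (φ n) x + B * fQi (φ n) x := by
    intro n
    filter_upwards [hfPipos (φ n), hfQipos (φ n)] with x hpx hqx
    have hr : 0 < fQi (φ n) x / fPi (φ n) x := div_pos hqx hpx
    rw [abs_mul, abs_of_pos hpx]
    calc |F (fQi (φ n) x / fPi (φ n) x)| * fPi (φ n) x
        ≤ (A + B * (fQi (φ n) x / fPi (φ n) x)) * fPi (φ n) x :=
          mul_le_mul_of_nonneg_right (hbd _ hr) hpx.le
      _ = A * fPi (φ n) x + B * fQi (φ n) x := by
          rw [add_mul, mul_assoc, div_mul_cancel₀ _ (ne_of_gt hpx)]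
  -- integrals of the dominating functions
  have hgint : ∀ n, Integrable (fun x => A * fPi (φ n) x + B * fQi (φ n) x) μ := fun n =>
    ((hPiint (φ n)).const_mul A).add ((hQiint (φ n)).const_mul B)
  have hgint0 : Integrable (fun x => A * fP x + B * fQ x) μ :=
    (hPint.const_mul A).add (hQint.const_mul B)
  have hgval : ∀ n, ∫ x, (A * fPi (φ n) x + B * fQi (φ n) x) ∂μ = A + B := by
    intro n
    rw [integral_add ((hPiint (φ n)).const_mul A) ((hQiint (φ n)).const_mul B),
      integral_const_mul, integral_const_mul, hfPiint, hfQiint]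
    ring
  have hgval0 : ∫ x, (A * fP x + B * fQ x) ∂μ = A + B := by
    rw [integral_add (hPint.const_mul A) (hQint.const_mul B),
      integral_const_mul, integral_const_mul, hfPint, hfQint]
    ring
  have hgconv : Tendsto (fun n => ∫ x, (A * fPi (φ n) x + B * fQi (φ n) x) ∂μ) atTop
      (nhds (∫ x, (A * fP x + B * fQ x) ∂μ)) := by
    rw [hgval0]
    exact (tendsto_congr hgval).2 tendsto_const_nhds
  exact pratt_aux (fun n => hint_i (φ n)) hint0 hgint hgint0 hdom haeh haeg hgconv
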